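/- For every A ∈ M_n(ℍ), the spectral norm of its complex adjoint matrix satisfies ‖χ_A‖₂ = ‖A‖₂. -/

import Mathlib

open scoped Quaternion
open Polynomial

noncomputable section

/-- The canonical embedding of the complex numbers into the real quaternions. -/
def Complex.toQuat (z : ℂ) : ℍ[ℝ] := ⟨z.re, z.im, 0, 0⟩

/-- The first complex component of a quaternion: `q = c1 q + (c2 q) * j`. -/
def Quaternion.c1 (q : ℍ[ℝ]) : ℂ := ⟨q.re, q.imI⟩

/-- The second complex component of a quaternion: `q = c1 q + (c2 q) * j`. -/
def Quaternion.c2 (q : ℍ[ℝ]) : ℂ := ⟨q.imJ, q.imK⟩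

/-- The complex adjoint matrix `χ_A = [[A₁, A₂], [-conj A₂, conj A₁]]` of a
quaternion matrix `A = A₁ + A₂ j`. -/
def Matrix.chi {ι : Type*} (A : Matrix ι ι ℍ[ℝ]) : Matrix (ι ⊕ ι) (ι ⊕ ι) ℂ :=
  Matrix.fromBlocks (A.map Quaternion.c1) (A.map Quaternion.c2)
    (-(A.map fun q => starRingEnd ℂ (Quaternion.c2 q)))
    (A.map fun q => starRingEnd ℂ (Quaternion.c1 q))

/-- Euclidean norm of a vector with entries in a normed division ring. -/
def euclNorm {ι : Type*} [Fintype ι] {K : Type*} [NormedDivisionRing K] (x : ι → K) : ℝ :=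
  Real.sqrt (∑ i, ‖x i‖ ^ 2)

/-- Spectral norm of a matrix: `‖M‖₂ = sup_{x ≠ 0} ‖Mx‖₂ / ‖x‖₂`. -/
def specNorm {ι : Type*} [Fintype ι] {K : Type*} [NormedDivisionRing K]
    (M : Matrix ι ι K) : ℝ :=
  sSup {r : ℝ | ∃ x : ι → K, x ≠ 0 ∧ r = euclNorm (M.mulVec x) / euclNorm x}

namespace SpecNormChiAux

open Quaternion Matrix

/-- `c1` as an additive monoid hom. -/
def c1Hom : ℍ[ℝ] →+ ℂ where
  toFun := Quaternion.c1
  map_zero' := by simp [Quaternion.c1, Complex.ext_iff]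
  map_add' a b := by simp [Quaternion.c1, Complex.ext_iff]

def c2Hom : ℍ[ℝ] →+ ℂ where
  toFun := Quaternion.c2
  map_zero' := by simp [Quaternion.c2, Complex.ext_iff]
  map_add' a b := by simp [Quaternion.c2, Complex.ext_iff]

lemma c1_mul (a b : ℍ[ℝ]) :
    Quaternion.c1 (a * b) =
      Quaternion.c1 a * Quaternion.c1 b -
        Quaternion.c2 a * starRingEnd ℂ (Quaternion.c2 b) := by
  simp [Quaternion.c1, Quaternion.c2, Complex.ext_iff]
  constructor <;> ring

lemma c2_mul (a b : ℍ[ℝ]) :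
    Quaternion.c2 (a * b) =
      Quaternion.c1 a * Quaternion.c2 b +
        Quaternion.c2 a * starRingEnd ℂ (Quaternion.c1 b) := by
  simp [Quaternion.c1, Quaternion.c2, Complex.ext_iff]
  constructor <;> ring

lemma norm_sq_c (q : ℍ[ℝ]) :
    ‖Quaternion.c1 q‖ ^ 2 + ‖Quaternion.c2 q‖ ^ 2 = ‖q‖ ^ 2 := by
  rw [sq ‖q‖, ← Quaternion.normSq_eq_norm_mul_self]
  simp [Quaternion.c1, Quaternion.c2, Complex.sq_norm, Complex.normSq_apply,
    Quaternion.normSq_def']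
  ring

variable {n : ℕ}

/-- The complex vector corresponding to a quaternion vector. -/
def Phi (x : Fin n → ℍ[ℝ]) : (Fin n ⊕ Fin n) → ℂ :=
  Sum.elim (fun i => Quaternion.c1 (x i))
    (fun i => -starRingEnd ℂ (Quaternion.c2 (x i)))

def Psi (y : (Fin n ⊕ Fin n) → ℂ) : Fin n → ℍ[ℝ] :=
  fun i => ⟨(y (Sum.inl i)).re, (y (Sum.inl i)).im, -(y (Sum.inr i)).re, (y (Sum.inr i)).im⟩

lemma Phi_Psi (y : (Fin n ⊕ Fin n) → ℂ) : Phi (Psi y) = y := by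
  funext i
  cases i <;> simp [Phi, Psi, Quaternion.c1, Quaternion.c2, Complex.ext_iff]

lemma Phi_eq_zero_iff (x : Fin n → ℍ[ℝ]) : Phi x = 0 ↔ x = 0 := by
  constructor
  · intro h
    funext i
    have h1 := congrFun h (Sum.inl i)
    have h2 := congrFun h (Sum.inr i)
    simp [Phi, Quaternion.c1, Quaternion.c2, Complex.ext_iff] at h1 h2
    ext <;> simp [h1.1, h1.2, h2.1, h2.2]
  · rintro rfl
    funext i
    cases i <;> simp [Phi, Quaternion.c1, Quaternion.c2, Complex.ext_iff]

lemma euclNorm_Phi (x : Fin n → ℍ[ℝ]) : euclNorm (Phi x) = euclNorm x := by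
  unfold euclNorm
  congr 1
  rw [Fintype.sum_sum_type]
  rw [← Finset.sum_add_distrib]
  refine Finset.sum_congr rfl fun i _ => ?_
  simpa [Phi] using norm_sq_c (x i)

lemma chi_mulVec (A : Matrix (Fin n) (Fin n) ℍ[ℝ]) (x : Fin n → ℍ[ℝ]) :
    (Matrix.chi A).mulVec (Phi x) = Phi (A.mulVec x) := by
  funext i
  cases i with
  | inl i =>
    show _ = Quaternion.c1 (∑ j, A i j * x j)
    rw [show (Quaternion.c1 : ℍ[ℝ] → ℂ) = c1Hom from rfl, map_sum]
    simp only [Matrix.mulVec, dotProduct, Fintype.sum_sum_type]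
    rw [← Finset.sum_add_distrib]
    refine Finset.sum_congr rfl fun j _ => ?_
    show Quaternion.c1 (A i j) * Quaternion.c1 (x j) +
        Quaternion.c2 (A i j) * (-starRingEnd ℂ (Quaternion.c2 (x j))) =
        c1Hom (A i j * x j)
    show _ = Quaternion.c1 (A i j * x j)
    rw [c1_mul]; ring
  | inr i =>
    show _ = -starRingEnd ℂ (Quaternion.c2 (∑ j, A i j * x j))
    rw [show (Quaternion.c2 : ℍ[ℝ] → ℂ) = c2Hom from rfl, map_sum, map_sum, ← Finset.sum_neg_distrib]
    simp only [Matrix.mulVec, dotProduct, Fintype.sum_sum_type]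
    rw [← Finset.sum_add_distrib]
    refine Finset.sum_congr rfl fun j _ => ?_
    show (-(starRingEnd ℂ (Quaternion.c2 (A i j)))) * Quaternion.c1 (x j) +
        starRingEnd ℂ (Quaternion.c1 (A i j)) * (-starRingEnd ℂ (Quaternion.c2 (x j))) =
        -starRingEnd ℂ (c2Hom (A i j * x j))
    show _ = -starRingEnd ℂ (Quaternion.c2 (A i j * x j))
    rw [c2_mul, map_add, _root_.map_mul, _root_.map_mul, Complex.conj_conj]
    ring

end SpecNormChiAux

open SpecNormChiAux

/-- For every quaternion matrix `A`, the spectral norm of the complex adjoint matrix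
satisfies `‖χ_A‖₂ = ‖A‖₂`. -/
theorem specNorm_chi {n : ℕ} (A : Matrix (Fin n) (Fin n) ℍ[ℝ]) :
    specNorm (Matrix.chi A) = specNorm A := by
  unfold specNorm
  congr 1
  ext r
  simp only [Set.mem_setOf_eq]
  constructor
  · rintro ⟨y, hy, rfl⟩
    obtain ⟨x, rfl⟩ : ∃ x, Phi x = y := ⟨Psi y, Phi_Psi y⟩
    refine ⟨x, fun h => hy (by rw [h, (Phi_eq_zero_iff 0).mpr rfl]), ?_⟩
    rw [chi_mulVec, euclNorm_Phi, euclNorm_Phi]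
  · rintro ⟨x, hx, rfl⟩
    exact ⟨Phi x, fun h => hx ((Phi_eq_zero_iff x).mp h),
      by rw [chi_mulVec, euclNorm_Phi, euclNorm_Phi]⟩
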